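/- Let A be a bounded subset of ℝ^m, let ν be a probability measure on A, and let G, H : A → [0,∞) be bounded measurable potentials with ν(G) > 0 and ν(H) > 0. Then W₁(Ψ_G(ν), Ψ_H(ν)) ≤ (2·diam(A)/ν(G)) · ∫_A |H − G| dν. -/

import Mathlib

open MeasureTheory

/-- Kantorovich–Rubinstein (Wasserstein-1) distance: infimum over couplings of
`∫ dist x y dπ`. -/
noncomputable def W1 {X : Type*} [MeasurableSpace X] [PseudoMetricSpace X]
    (μ ν : Measure X) : ℝ :=
  sInf {r : ℝ | ∃ π : Measure (X × X),
    π.map Prod.fst = μ ∧ π.map Prod.snd = ν ∧ r = ∫ p, dist p.1 p.2 ∂π}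

/-- Boltzmann–Gibbs transformation `Ψ_G(η)(dx) = G(x) η(dx) / η(G)` of a measure
concentrated on `A`. -/
noncomputable def BoltzmannGibbs {X : Type*} [MeasurableSpace X]
    (A : Set X) (η : Measure X) (G : X → ℝ) : Measure X :=
  (ENNReal.ofReal (∫ x in A, G x ∂η))⁻¹ •
    (η.restrict A).withDensity (fun x => ENNReal.ofReal (G x))

/-- modulus of continuity of `Ψ_·(ν)` with respect to the potential:
`W₁(Ψ_G(ν), Ψ_H(ν)) ≤ (2 diam(A) / ν(G)) ∫_A |H − G| dν`. -/
theorem stmt_3 {m : ℕ} (A : Set (EuclideanSpace ℝ (Fin m)))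
    (hA : Bornology.IsBounded A) (hAmeas : MeasurableSet A)
    (ν : Measure (EuclideanSpace ℝ (Fin m))) [IsProbabilityMeasure ν]
    (hν : ν Aᶜ = 0)
    (G H : EuclideanSpace ℝ (Fin m) → ℝ)
    (hGmeas : Measurable G) (hHmeas : Measurable H)
    (hGnonneg : ∀ x ∈ A, 0 ≤ G x) (hHnonneg : ∀ x ∈ A, 0 ≤ H x)
    (CG : ℝ) (hCG : ∀ x ∈ A, |G x| ≤ CG)
    (CH : ℝ) (hCH : ∀ x ∈ A, |H x| ≤ CH)
    (hνG : 0 < ∫ x in A, G x ∂ν) (hνH : 0 < ∫ x in A, H x ∂ν) :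
    W1 (BoltzmannGibbs A ν G) (BoltzmannGibbs A ν H) ≤
      (2 * Metric.diam A / ∫ x in A, G x ∂ν) * ∫ x in A, |H x - G x| ∂ν := by
  classical
  set a := ∫ x in A, G x ∂ν with ha
  set b := ∫ x in A, H x ∂ν with hb
  set base := ν.restrict A with hbase
  have hbaseuniv : base Set.univ = 1 := by
    rw [hbase, Measure.restrict_apply_univ]
    have h1 := measure_add_measure_compl (μ := ν) hAmeas
    rw [hν, add_zero] at h1
    rw [h1]; exact measure_univ
  haveI : IsProbabilityMeasure base := ⟨hbaseuniv⟩
  set cG := ENNReal.ofReal a with hcG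
  set cH := ENNReal.ofReal b with hcH
  have hcG0 : cG ≠ 0 := (ENNReal.ofReal_pos.2 hνG).ne'
  have hcGtop : cG ≠ ⊤ := ENNReal.ofReal_ne_top
  have hcH0 : cH ≠ 0 := (ENNReal.ofReal_pos.2 hνH).ne'
  have hcHtop : cH ≠ ⊤ := ENNReal.ofReal_ne_top
  set f : EuclideanSpace ℝ (Fin m) → ENNReal := fun x => cG⁻¹ * ENNReal.ofReal (G x) with hf
  set g : EuclideanSpace ℝ (Fin m) → ENNReal := fun x => cH⁻¹ * ENNReal.ofReal (H x) with hg
  have hfm : Measurable f := measurable_const.mul hGmeas.ennreal_ofReal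
  have hgm : Measurable g := measurable_const.mul hHmeas.ennreal_ofReal
  have hGae : 0 ≤ᵐ[base] G := (ae_restrict_iff' hAmeas).2 (ae_of_all _ hGnonneg)
  have hHae : 0 ≤ᵐ[base] H := (ae_restrict_iff' hAmeas).2 (ae_of_all _ hHnonneg)
  have hGint : Integrable G base := by
    refine Integrable.mono' (integrable_const CG) hGmeas.aestronglyMeasurable ?_
    exact (ae_restrict_iff' hAmeas).2 (ae_of_all _ fun x hx => by
      simpa [Real.norm_eq_abs] using hCG x hx)
  have hHint : Integrable H base := by
    refine Integrable.mono' (integrable_const CH) hHmeas.aestronglyMeasurable ?_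
    exact (ae_restrict_iff' hAmeas).2 (ae_of_all _ fun x hx => by
      simpa [Real.norm_eq_abs] using hCH x hx)
  have hGHint : Integrable (fun x => |H x - G x|) base := (hHint.sub hGint).abs
  have hlG : ∫⁻ x, ENNReal.ofReal (G x) ∂base = cG :=
    (ofReal_integral_eq_lintegral_ofReal hGint hGae).symm
  have hlH : ∫⁻ x, ENNReal.ofReal (H x) ∂base = cH :=
    (ofReal_integral_eq_lintegral_ofReal hHint hHae).symm
  have hlf : ∫⁻ x, f x ∂base = 1 := by
    rw [hf]
    rw [lintegral_const_mul _ hGmeas.ennreal_ofReal, hlG,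
      ENNReal.inv_mul_cancel hcG0 hcGtop]
  have hlg : ∫⁻ x, g x ∂base = 1 := by
    rw [hg]
    rw [lintegral_const_mul _ hHmeas.ennreal_ofReal, hlH,
      ENNReal.inv_mul_cancel hcH0 hcHtop]
  have hμ : BoltzmannGibbs A ν G = base.withDensity f := by
    unfold BoltzmannGibbs
    rw [← withDensity_smul _ hGmeas.ennreal_ofReal]
    rfl
  have hρ : BoltzmannGibbs A ν H = base.withDensity g := by
    unfold BoltzmannGibbs
    rw [← withDensity_smul _ hHmeas.ennreal_ofReal]
    rfl
  set p : EuclideanSpace ℝ (Fin m) → ENNReal := fun x => min (f x) (g x) with hp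
  have hpm : Measurable p := hfm.min hgm
  have hpf : p ≤ f := fun x => min_le_left _ _
  have hpg : p ≤ g := fun x => min_le_right _ _
  set lam := base.withDensity p with hlam
  set σ := base.withDensity (fun x => f x - p x) with hσ
  set τ := base.withDensity (fun x => g x - p x) with hτ
  have hσμ : lam + σ = base.withDensity f := by
    rw [hlam, hσ, ← withDensity_add_right _ (g := fun x => f x - p x) (hfm.sub hpm)]
    congr 1; funext x
    exact add_tsub_cancel_of_le (hpf x)
  have hτρ : lam + τ = base.withDensity g := by
    rw [hlam, hτ, ← withDensity_add_right _ (g := fun x => g x - p x) (hgm.sub hpm)]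
    congr 1; funext x
    exact add_tsub_cancel_of_le (hpg x)
  have hlp_le : ∫⁻ x, p x ∂base ≤ 1 := hlf ▸ lintegral_mono hpf
  have hlp_ne : ∫⁻ x, p x ∂base ≠ ⊤ := (lt_of_le_of_lt hlp_le ENNReal.one_lt_top).ne
  have hσuniv : σ Set.univ = 1 - ∫⁻ x, p x ∂base := by
    rw [hσ, withDensity_apply _ MeasurableSet.univ, Measure.restrict_univ,
      lintegral_sub hpm hlp_ne (ae_of_all _ hpf), hlf]
  have hτuniv' : τ Set.univ = 1 - ∫⁻ x, p x ∂base := by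
    rw [hτ, withDensity_apply _ MeasurableSet.univ, Measure.restrict_univ,
      lintegral_sub hpm hlp_ne (ae_of_all _ hpg), hlg]
  set ε := σ Set.univ with hε
  have hτuniv : τ Set.univ = ε := by rw [hσuniv]; exact hτuniv'
  have hεle1 : ε ≤ 1 := by rw [hσuniv]; exact tsub_le_self
  have hεtop : ε ≠ ⊤ := (lt_of_le_of_lt hεle1 ENNReal.one_lt_top).ne
  -- the set defining W1 and a lower bound
  set S := {r : ℝ | ∃ π : Measure (EuclideanSpace ℝ (Fin m) × EuclideanSpace ℝ (Fin m)),
    π.map Prod.fst = BoltzmannGibbs A ν G ∧ π.map Prod.snd = BoltzmannGibbs A ν H ∧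
      r = ∫ q, dist q.1 q.2 ∂π} with hS
  have hbdd : BddBelow S := by
    refine ⟨0, fun r hr => ?_⟩
    obtain ⟨π, _, _, hr⟩ := hr
    rw [hr]; exact integral_nonneg fun q => dist_nonneg
  have hW1S : W1 (BoltzmannGibbs A ν G) (BoltzmannGibbs A ν H) = sInf S := rfl
  set D := ∫ x in A, |H x - G x| ∂ν with hD
  have hD0 : 0 ≤ D := integral_nonneg fun x => abs_nonneg _
  set D' := ENNReal.ofReal D with hD'
  have hRHS0 : 0 ≤ (2 * Metric.diam A / a) * D :=
    mul_nonneg (div_nonneg (by positivity) hνG.le) hD0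
  have hdiag : Measurable (fun x : EuclideanSpace ℝ (Fin m) => (x, x)) := measurable_id.prodMk measurable_id
  have hdistc : Continuous (fun q : EuclideanSpace ℝ (Fin m) × EuclideanSpace ℝ (Fin m) => dist q.1 q.2) :=
    continuous_fst.dist continuous_snd
  -- key mass bound : ε ≤ cG⁻¹ * (2 * D')
  have hkey : ε ≤ cG⁻¹ * (2 * D') := by
    have hfp : (fun x => f x - p x) = fun x => f x - g x := by
      funext x; rw [hp]; exact tsub_min
    have hptw : ∀ x, f x - g x ≤
        cG⁻¹ * (ENNReal.ofReal (G x) - ENNReal.ofReal (H x)) + (cG⁻¹ - cH⁻¹) * ENNReal.ofReal (H x) := by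
      intro x
      rw [tsub_le_iff_right]
      calc f x = cG⁻¹ * ENNReal.ofReal (G x) := rfl
        _ ≤ cG⁻¹ * ((ENNReal.ofReal (G x) - ENNReal.ofReal (H x)) + ENNReal.ofReal (H x)) :=
            mul_le_mul_right le_tsub_add _
        _ = cG⁻¹ * (ENNReal.ofReal (G x) - ENNReal.ofReal (H x)) + cG⁻¹ * ENNReal.ofReal (H x) := by
            ring
        _ ≤ cG⁻¹ * (ENNReal.ofReal (G x) - ENNReal.ofReal (H x)) +
              ((cG⁻¹ - cH⁻¹) + cH⁻¹) * ENNReal.ofReal (H x) :=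
            add_le_add_right (mul_le_mul_left le_tsub_add _) _
        _ = cG⁻¹ * (ENNReal.ofReal (G x) - ENNReal.ofReal (H x)) +
              ((cG⁻¹ - cH⁻¹) * ENNReal.ofReal (H x) + cH⁻¹ * ENNReal.ofReal (H x)) := by
            ring
        _ = cG⁻¹ * (ENNReal.ofReal (G x) - ENNReal.ofReal (H x)) +
              (cG⁻¹ - cH⁻¹) * ENNReal.ofReal (H x) + cH⁻¹ * ENNReal.ofReal (H x) := by
            ring
        _ = cG⁻¹ * (ENNReal.ofReal (G x) - ENNReal.ofReal (H x)) +
              (cG⁻¹ - cH⁻¹) * ENNReal.ofReal (H x) + g x := rfl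
    have hI1 : ∫⁻ x, ENNReal.ofReal (G x) - ENNReal.ofReal (H x) ∂base ≤ D' := by
      have hae : ∀ᵐ x ∂base, ENNReal.ofReal (G x) - ENNReal.ofReal (H x) ≤
          ENNReal.ofReal (|H x - G x|) := by
        filter_upwards [hHae] with x hx
        rw [← ENNReal.ofReal_sub _ hx]
        exact ENNReal.ofReal_le_ofReal (by rw [abs_sub_comm]; exact le_abs_self _)
      calc ∫⁻ x, ENNReal.ofReal (G x) - ENNReal.ofReal (H x) ∂base
          ≤ ∫⁻ x, ENNReal.ofReal (|H x - G x|) ∂base := lintegral_mono_ae hae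
        _ = D' := by
            rw [hD', hD, hbase,
              ofReal_integral_eq_lintegral_ofReal hGHint (ae_of_all _ fun x => abs_nonneg _)]
    have hI2 : (cG⁻¹ - cH⁻¹) * cH ≤ cG⁻¹ * D' := by
      have h1 : (cG⁻¹ - cH⁻¹) * cH = cG⁻¹ * cH - 1 := by
        rw [ENNReal.sub_mul (fun _ _ => hcHtop), ENNReal.inv_mul_cancel hcH0 hcHtop]
      have h2 : cG⁻¹ * (cH - cG) = cG⁻¹ * cH - 1 := by
        rw [ENNReal.mul_sub (fun _ _ => (ENNReal.inv_ne_top).2 hcG0),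
          ENNReal.inv_mul_cancel hcG0 hcGtop]
      rw [h1, ← h2]
      refine mul_le_mul_right ?_ _
      have h3 : cH - cG = ENNReal.ofReal (b - a) := by
        rw [ENNReal.ofReal_sub _ hνG.le]
      rw [h3]
      refine ENNReal.ofReal_le_ofReal ?_
      have h4 : b - a = ∫ x, (H x - G x) ∂base := by
        rw [integral_sub hHint hGint]
      rw [h4, hD, hbase]
      exact integral_mono (hHint.sub hGint) hGHint (fun x => le_abs_self _)
    calc ε = ∫⁻ x, f x - g x ∂base := by
          rw [hε, hσ, withDensity_apply _ MeasurableSet.univ, Measure.restrict_univ, hfp]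
      _ ≤ ∫⁻ x, cG⁻¹ * (ENNReal.ofReal (G x) - ENNReal.ofReal (H x)) +
            (cG⁻¹ - cH⁻¹) * ENNReal.ofReal (H x) ∂base := lintegral_mono hptw
      _ = cG⁻¹ * ∫⁻ x, ENNReal.ofReal (G x) - ENNReal.ofReal (H x) ∂base +
            (cG⁻¹ - cH⁻¹) * cH := by
          rw [lintegral_add_left (f := fun x => cG⁻¹ * (ENNReal.ofReal (G x) - ENNReal.ofReal (H x)))
              (measurable_const.mul (hGmeas.ennreal_ofReal.sub hHmeas.ennreal_ofReal)),
            lintegral_const_mul _ (f := fun x => ENNReal.ofReal (G x) - ENNReal.ofReal (H x))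
              (hGmeas.ennreal_ofReal.sub hHmeas.ennreal_ofReal),
            lintegral_const_mul _ hHmeas.ennreal_ofReal, hlH]
      _ ≤ cG⁻¹ * D' + cG⁻¹ * D' := add_le_add (mul_le_mul_right hI1 _) hI2
      _ = cG⁻¹ * (2 * D') := by ring
  rw [hW1S]
  by_cases hε0 : ε = 0
  · -- degenerate case: the two measures coincide
    have hσ0 : σ = 0 := Measure.measure_univ_eq_zero.1 hε0
    have hτ0 : τ = 0 := Measure.measure_univ_eq_zero.1 (by rw [hτuniv, hε0])
    have hμρ : BoltzmannGibbs A ν H = BoltzmannGibbs A ν G := by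
      rw [hμ, hρ, ← hσμ, ← hτρ, hσ0, hτ0]
    set π := (BoltzmannGibbs A ν G).map (fun x : EuclideanSpace ℝ (Fin m) => (x, x)) with hπ
    have hfst : π.map Prod.fst = BoltzmannGibbs A ν G := by
      rw [hπ, Measure.map_map measurable_fst hdiag]
      have : (Prod.fst ∘ fun x : EuclideanSpace ℝ (Fin m) => (x, x)) = id := rfl
      rw [this, Measure.map_id]
    have hsnd : π.map Prod.snd = BoltzmannGibbs A ν H := by
      rw [hπ, Measure.map_map measurable_snd hdiag]
      have : (Prod.snd ∘ fun x : EuclideanSpace ℝ (Fin m) => (x, x)) = id := rfl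
      rw [this, Measure.map_id, hμρ]
    have hcost : ∫ q, dist q.1 q.2 ∂π = 0 := by
      rw [hπ, integral_map hdiag.aemeasurable hdistc.aestronglyMeasurable]
      simp
    exact le_trans (csInf_le hbdd ⟨π, hfst, hsnd, hcost.symm⟩) hRHS0
  · -- main case
    haveI : IsFiniteMeasure σ := ⟨lt_of_le_of_lt hεle1 ENNReal.one_lt_top⟩
    haveI : IsFiniteMeasure τ :=
      ⟨by rw [hτuniv]; exact lt_of_le_of_lt hεle1 ENNReal.one_lt_top⟩
    set π := lam.map (fun x : EuclideanSpace ℝ (Fin m) => (x, x)) + ε⁻¹ • (σ.prod τ) with hπ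
    have hfst : π.map Prod.fst = BoltzmannGibbs A ν G := by
      rw [hπ, Measure.map_add _ _ measurable_fst, Measure.map_map measurable_fst hdiag,
        Measure.map_smul, Measure.map_fst_prod, hτuniv]
      have h5 : (Prod.fst ∘ fun x : EuclideanSpace ℝ (Fin m) => (x, x)) = id := rfl
      rw [h5, Measure.map_id, smul_smul, ENNReal.inv_mul_cancel hε0 hεtop, one_smul, hσμ, hμ]
    have hsnd : π.map Prod.snd = BoltzmannGibbs A ν H := by
      rw [hπ, Measure.map_add _ _ measurable_snd, Measure.map_map measurable_snd hdiag,
        Measure.map_smul, Measure.map_snd_prod, ← hε]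
      have h5 : (Prod.snd ∘ fun x : EuclideanSpace ℝ (Fin m) => (x, x)) = id := rfl
      rw [h5, Measure.map_id, smul_smul, ENNReal.inv_mul_cancel hε0 hεtop, one_smul, hτρ, hρ]
    -- support facts
    have hres : ∀ q : EuclideanSpace ℝ (Fin m) → ENNReal, base.withDensity q Aᶜ = 0 := by
      intro q
      rw [hbase, withDensity_apply _ hAmeas.compl,
        Measure.restrict_restrict hAmeas.compl, Set.compl_inter_self,
        Measure.restrict_empty, lintegral_zero_measure]
    have hprodA : (σ.prod τ) ((A ×ˢ A)ᶜ) = 0 := by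
      have hle : (σ.prod τ) ((A ×ˢ A)ᶜ) ≤ (σ.prod τ) (Aᶜ ×ˢ Set.univ) +
          (σ.prod τ) (Set.univ ×ˢ Aᶜ) := by
        rw [Set.compl_prod_eq_union]
        exact measure_union_le _ _
      rw [Measure.prod_prod, Measure.prod_prod, hσ, hτ, hres, hres] at hle
      simpa using hle
    have haemem : ∀ᵐ q ∂(σ.prod τ), q ∈ A ×ˢ A := by
      rw [MeasureTheory.ae_iff]
      exact hprodA
    have hbound : ∀ᵐ q ∂(σ.prod τ), ‖dist q.1 q.2‖ ≤ Metric.diam A := by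
      filter_upwards [haemem] with q hq
      rw [Real.norm_eq_abs, abs_of_nonneg dist_nonneg]
      exact Metric.dist_le_diam_of_mem hA hq.1 hq.2
    have hint2' : Integrable (fun q : EuclideanSpace ℝ (Fin m) × EuclideanSpace ℝ (Fin m) => dist q.1 q.2) (σ.prod τ) :=
      Integrable.mono' (integrable_const (Metric.diam A)) hdistc.aestronglyMeasurable hbound
    have hεinv0 : ε⁻¹ ≠ 0 := ENNReal.inv_ne_zero.2 hεtop
    have hεinvtop : ε⁻¹ ≠ ⊤ := ENNReal.inv_ne_top.2 hε0
    have hint2 : Integrable (fun q : EuclideanSpace ℝ (Fin m) × EuclideanSpace ℝ (Fin m) => dist q.1 q.2) (ε⁻¹ • (σ.prod τ)) :=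
      (integrable_smul_measure hεinv0 hεinvtop).2 hint2'
    have hdiagae : ∀ᵐ q ∂(lam.map (fun x : EuclideanSpace ℝ (Fin m) => (x, x))), q.1 = q.2 := by
      have hms : MeasurableSet {q : EuclideanSpace ℝ (Fin m) × EuclideanSpace ℝ (Fin m) | q.1 = q.2} :=
        measurableSet_eq_fun measurable_fst measurable_snd
      rw [MeasureTheory.ae_iff]
      have h8 : {q : EuclideanSpace ℝ (Fin m) × EuclideanSpace ℝ (Fin m) | ¬ q.1 = q.2} =
          {q : EuclideanSpace ℝ (Fin m) × EuclideanSpace ℝ (Fin m) | q.1 = q.2}ᶜ := rfl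
      rw [h8, Measure.map_apply hdiag hms.compl]
      have h9 : (fun x : EuclideanSpace ℝ (Fin m) => (x, x)) ⁻¹'
          ({q : EuclideanSpace ℝ (Fin m) × EuclideanSpace ℝ (Fin m) | q.1 = q.2}ᶜ) = ∅ := by
        ext x; simp
      rw [h9]
      simp
    have hdist0 : (fun q : EuclideanSpace ℝ (Fin m) × EuclideanSpace ℝ (Fin m) => dist q.1 q.2) =ᵐ[lam.map (fun x : EuclideanSpace ℝ (Fin m) => (x, x))] 0 := by
      filter_upwards [hdiagae] with q hq
      simp [hq]
    have hint1 : Integrable (fun q : EuclideanSpace ℝ (Fin m) × EuclideanSpace ℝ (Fin m) => dist q.1 q.2) (lam.map (fun x : EuclideanSpace ℝ (Fin m) => (x, x))) :=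
      (integrable_zero _ _ _).congr hdist0.symm
    have hcost1 : ∫ q, dist q.1 q.2 ∂(lam.map (fun x : EuclideanSpace ℝ (Fin m) => (x, x))) = 0 :=
      integral_eq_zero_of_ae hdist0
    have hprodmass : (σ.prod τ) Set.univ = ε * ε := by
      rw [← Set.univ_prod_univ, Measure.prod_prod, hτuniv, ← hε]
    have hεr0 : ε.toReal ≠ 0 := by
      simp [ENNReal.toReal_ne_zero, hε0, hεtop]
    have hcost2 : ∫ q, dist q.1 q.2 ∂(ε⁻¹ • (σ.prod τ)) ≤ Metric.diam A * ε.toReal := by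
      rw [integral_smul_measure]
      have h6 : ∫ q, dist q.1 q.2 ∂(σ.prod τ) ≤ Metric.diam A * ((σ.prod τ) Set.univ).toReal := by
        refine le_trans (le_abs_self _) ?_
        have h := norm_integral_le_of_norm_le_const hbound
        rw [Real.norm_eq_abs] at h
        exact h
      calc ε⁻¹.toReal • ∫ q, dist q.1 q.2 ∂(σ.prod τ)
          ≤ ε⁻¹.toReal * (Metric.diam A * ((σ.prod τ) Set.univ).toReal) := by
            rw [smul_eq_mul]
            exact mul_le_mul_of_nonneg_left h6 ENNReal.toReal_nonneg
        _ = Metric.diam A * ε.toReal := by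
            rw [hprodmass, ENNReal.toReal_mul, ENNReal.toReal_inv]
            field_simp
    have hcost : ∫ q, dist q.1 q.2 ∂π ≤ Metric.diam A * ε.toReal := by
      rw [hπ, integral_add_measure hint1 hint2, hcost1, zero_add]
      exact hcost2
    refine le_trans (csInf_le hbdd ⟨π, hfst, hsnd, rfl⟩) (le_trans hcost ?_)
    -- final arithmetic
    have hεreal : ε.toReal ≤ a⁻¹ * (2 * D) := by
      have h7 : (cG⁻¹ * (2 * D')).toReal = a⁻¹ * (2 * D) := by
        rw [ENNReal.toReal_mul, ENNReal.toReal_mul, ENNReal.toReal_inv, hcG, hD',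
          ENNReal.toReal_ofReal hνG.le, ENNReal.toReal_ofReal hD0]
        norm_num
      rw [← h7]
      exact ENNReal.toReal_mono (by
        refine ENNReal.mul_ne_top ((ENNReal.inv_ne_top).2 hcG0) ?_
        exact ENNReal.mul_ne_top (by norm_num) ENNReal.ofReal_ne_top) hkey
    calc Metric.diam A * ε.toReal ≤ Metric.diam A * (a⁻¹ * (2 * D)) :=
          mul_le_mul_of_nonneg_left hεreal Metric.diam_nonneg
      _ = (2 * Metric.diam A / a) * D := by ring
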